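/- Let g : E → ℝ be a function whose gradient ∇g is differentiable on an open set U and satisfies the normalization ‖∇g(x)‖ = 1 for all x ∈ U, and let R : E → E be a linear isometry (e.g. a rotation of the plane). Consider the rotated vector field F(x) = R(∇g(x)) driving the Equilibrium Flow. Then for every x ∈ U, taking N = ∇g(x) (the unit normal at a point where the gradient is normal to the curve), the normal-normal component of the Jacobian of F vanishes: ⟨N, (DF)(x)(N)⟩ = 0. Hence J_nn = 0 and the Equilibrium Flow is marginally stable. -/

import Mathlib

open InnerProductSpace

/-- Marginal stability of the Equilibrium Flow: if `∇g` is differentiable on an open set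
`U` with `‖∇g x‖ = 1` on `U`, and `R` is a linear isometry of the plane, then for the
rotated field `F = R ∘ ∇g` and normal `N = ∇g x`, the normal-normal component of the
Jacobian of `F` vanishes: `⟨N, DF(x) N⟩ = 0`, i.e. `J_nn = 0`. -/
theorem equilibrium_flow_marginally_stable
    (g : EuclideanSpace ℝ (Fin 2) → ℝ) (U : Set (EuclideanSpace ℝ (Fin 2)))
    (hU : IsOpen U)
    (hdiff : DifferentiableOn ℝ (gradient g) U)
    (hnorm : ∀ x ∈ U, ‖gradient g x‖ = 1)
    (R : EuclideanSpace ℝ (Fin 2) →ₗᵢ[ℝ] EuclideanSpace ℝ (Fin 2)) :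
    ∀ x ∈ U,
      (inner ℝ (gradient g x)
        (fderiv ℝ (fun y => R (gradient g y)) x (gradient g x)) : ℝ) = 0 := by
  intro x hx
  set G := gradient g with hG
  -- g is differentiable at every point of U, with derivative `toDual (G y)`
  have hgd : ∀ y ∈ U, HasFDerivAt g ((toDual ℝ (EuclideanSpace ℝ (Fin 2))) (G y)) y := by
    intro y hy
    have h1 : fderiv ℝ g y ≠ 0 := by
      intro h
      have hGy : G y = 0 := by simp [hG, gradient, h]
      have := hnorm y hy
      rw [hGy] at this; simp at this
    have hdy : DifferentiableAt ℝ g y := by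
      by_contra h
      exact h1 (fderiv_zero_of_not_differentiableAt h)
    have heq : (toDual ℝ (EuclideanSpace ℝ (Fin 2))) (G y) = fderiv ℝ g y := by
      simp [hG, gradient]
    rw [heq]
    exact hdy.hasFDerivAt
  -- G is differentiable at x
  have hGx : DifferentiableAt ℝ G x := hdiff.differentiableAt (hU.mem_nhds hx)
  set DG := fderiv ℝ G x with hDG
  have hDGx : HasFDerivAt G DG x := hGx.hasFDerivAt
  -- second derivative of g at x, as a bilinear map
  set L : EuclideanSpace ℝ (Fin 2) →L[ℝ] (EuclideanSpace ℝ (Fin 2) →L[ℝ] ℝ) := (toDual ℝ (EuclideanSpace ℝ (Fin 2))).toContinuousLinearEquiv.toContinuousLinearMap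
  have hf' : HasFDerivAt (fun y => (toDual ℝ (EuclideanSpace ℝ (Fin 2))) (G y)) (L.comp DG) x :=
    L.hasFDerivAt.comp x hDGx
  have hev : ∀ᶠ y in nhds x, HasFDerivAt g ((toDual ℝ (EuclideanSpace ℝ (Fin 2))) (G y)) y := by
    filter_upwards [hU.mem_nhds hx] with y hy using hgd y hy
  have hsymm : ∀ v w : EuclideanSpace ℝ (Fin 2), (inner ℝ (DG v) w : ℝ) = inner ℝ (DG w) v := by
    intro v w
    have := second_derivative_symmetric_of_eventually hev hf' v w
    simpa [L, toDual_apply_apply] using this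
  -- differentiate ‖G‖² = 1 on U
  have hinner : HasFDerivAt (fun y => (inner ℝ (G y) (G y) : ℝ))
      ((fderivInnerCLM ℝ (G x, G x)).comp (DG.prod DG)) x :=
    hDGx.inner ℝ hDGx
  have hconst : HasFDerivAt (fun y : EuclideanSpace ℝ (Fin 2) => (inner ℝ (G y) (G y) : ℝ)) (0 : EuclideanSpace ℝ (Fin 2) →L[ℝ] ℝ) x := by
    have : (fun y : EuclideanSpace ℝ (Fin 2) => (inner ℝ (G y) (G y) : ℝ)) =ᶠ[nhds x] fun _ => (1 : ℝ) := by
      filter_upwards [hU.mem_nhds hx] with y hy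
      have := hnorm y hy
      rw [real_inner_self_eq_norm_sq, this]; norm_num
    exact (hasFDerivAt_const (1 : ℝ) x).congr_of_eventuallyEq this
  have hzero : (fderivInnerCLM ℝ (G x, G x)).comp (DG.prod DG) = 0 :=
    hinner.unique hconst
  have horth : ∀ v : EuclideanSpace ℝ (Fin 2), (inner ℝ (G x) (DG v) : ℝ) + inner ℝ (DG v) (G x) = 0 := by
    intro v
    have := congrFun (congrArg DFunLike.coe hzero) v
    simpa [fderivInnerCLM] using this
  have horth' : ∀ v : EuclideanSpace ℝ (Fin 2), (inner ℝ (DG v) (G x) : ℝ) = 0 := by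
    intro v
    have h := horth v
    rw [real_inner_comm (DG v) (G x)] at h
    exact add_self_eq_zero.mp h
  -- hence DG (G x) = 0
  have hDGN : DG (G x) = 0 := by
    have : (inner ℝ (DG (G x)) (DG (G x)) : ℝ) = 0 := by
      rw [hsymm (G x) (DG (G x))]
      exact horth' (DG (G x))
    exact inner_self_eq_zero.mp this
  -- chain rule for R ∘ G
  have hRG : HasFDerivAt (fun y => R (G y)) (R.toContinuousLinearMap.comp DG) x :=
    R.toContinuousLinearMap.hasFDerivAt.comp x hDGx
  rw [hRG.fderiv]
  simp [hDGN]
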